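/- Let (b_n)_{n≥0} and (c_n)_{n≥0} be sequences of real numbers. Then b_n = Σ_{k=0}^{n} binom(2n, n−k) c_k for all n ≥ 0 if and only if c_0 = b_0 and, for all n ≥ 1, c_n = Σ_{k=0}^{n} (−1)^{k+n} (2n/(n+k)) binom(n+k, n−k) b_k = Σ_{k=0}^{n} (−1)^{k+n} [ binom(n+k, n−k) + binom(n+k−1, n−k−1) ] b_k. -/

import Mathlib

open Finset

noncomputable def invS (b : ℕ) : PowerSeries ℝ :=
  PowerSeries.mk fun j => (-1 : ℝ) ^ j * ((b + j).choose j : ℝ)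

lemma coeffPow (m k : ℕ) :
    PowerSeries.coeff (R := ℝ) k ((1 + PowerSeries.X) ^ m) = (m.choose k : ℝ) := by
  have : ((1 + PowerSeries.X) ^ m : PowerSeries ℝ) =
      (((1 + Polynomial.X) ^ m : Polynomial ℝ) : PowerSeries ℝ) := by
    push_cast
    simp
  rw [this, Polynomial.coeff_coe, Polynomial.coeff_one_add_X_pow]

lemma invS_key (b : ℕ) : (1 + PowerSeries.X) ^ (b + 1) * invS b = 1 := by
  induction b with
  | zero =>
    ext k
    rcases k with _ | k
    · simp [invS]
    · rw [pow_one, add_mul, one_mul, map_add, PowerSeries.coeff_succ_X_mul]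
      simp [invS, pow_succ]
  | succ b ih =>
    have h : (1 + PowerSeries.X) * invS (b + 1) = invS b := by
      ext k
      rcases k with _ | k
      · simp [invS]
      · rw [add_mul, one_mul, map_add, PowerSeries.coeff_succ_X_mul]
        simp only [invS, PowerSeries.coeff_mk]
        have pas : ((b + 1 + (k + 1)).choose (k + 1) : ℝ)
            = ((b + 1 + k).choose k : ℝ) + ((b + 1 + k).choose (k + 1) : ℝ) := by
          rw [show b + 1 + (k + 1) = (b + 1 + k) + 1 by ring, Nat.choose_succ_succ]
          push_cast; ring
        rw [show b + (k + 1) = b + 1 + k by ring, pas]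
        ring
    calc (1 + PowerSeries.X) ^ (b + 1 + 1) * invS (b + 1)
        = (1 + PowerSeries.X) ^ (b + 1) * ((1 + PowerSeries.X) * invS (b + 1)) := by ring
      _ = 1 := by rw [h, ih]

lemma Lkey (a b d : ℕ) (h : b + 1 ≤ a) :
    ∑ j ∈ range (d + 1), (-1 : ℝ) ^ j * ((b + j).choose j : ℝ) * (a.choose (d - j) : ℝ)
      = ((a - b - 1).choose d : ℝ) := by
  have hpow : ((1 + PowerSeries.X : PowerSeries ℝ)) ^ a
      = (1 + PowerSeries.X) ^ (b + 1) * (1 + PowerSeries.X) ^ (a - b - 1) := by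
    rw [← pow_add]; congr 1; omega
  have key : invS b * (1 + PowerSeries.X) ^ a = (1 + PowerSeries.X) ^ (a - b - 1) := by
    rw [hpow, ← mul_assoc, mul_comm (invS b), invS_key, one_mul]
  have := congrArg (PowerSeries.coeff (R := ℝ) d) key
  rw [PowerSeries.coeff_mul, Finset.Nat.sum_antidiagonal_eq_sum_range_succ_mk, coeffPow] at this
  rw [← this]
  refine Finset.sum_congr rfl fun j hj => ?_
  simp [invS, coeffPow, mul_assoc]

lemma orth (n m : ℕ) (h : m ≤ n) :
    ∑ k ∈ Icc m n, ((2*n).choose (n-k) : ℝ) *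
      ((-1:ℝ)^(m+k) * (((k+m).choose (k-m) : ℝ) +
        if m < k then ((k+m-1).choose (k-m-1) : ℝ) else 0))
    = if m = n then 1 else 0 := by
  rw [← Finset.Ico_add_one_right_eq_Icc, Finset.sum_Ico_eq_sum_range]
  have hd : n + 1 - m = (n - m) + 1 := by omega
  rw [hd]
  set d := n - m with hdd
  have hsum : ∀ i, ((2*n).choose (n-(m+i)) : ℝ) *
      ((-1:ℝ)^(m+(m+i)) * (((m+i+m).choose (m+i-m):ℝ) +
        if m < m+i then ((m+i+m-1).choose (m+i-m-1):ℝ) else 0))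
      = (-1:ℝ)^i * ((2*m+i).choose i : ℝ) * ((2*n).choose (d-i) : ℝ)
        + (if i = 0 then 0 else
            (-1:ℝ)^i * ((2*m+(i-1)).choose (i-1) : ℝ) * ((2*n).choose (d-i) : ℝ)) := by
    intro i
    have hsgn : (-1:ℝ)^(m+(m+i)) = (-1:ℝ)^i := by
      rw [show m+(m+i) = 2*m+i by ring, pow_add, pow_mul, neg_one_sq, one_pow, one_mul]
    have e1 : m+i+m = 2*m+i := by omega
    have e2 : m+i-m = i := by omega
    have e3 : n-(m+i) = d-i := by omega
    rw [hsgn, e1, e2, e3]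
    rcases Nat.eq_zero_or_pos i with hi | hi
    · subst hi; simp
    · have : m < m + i := by omega
      rw [if_pos this, if_neg (by omega : ¬ i = 0)]
      have e4 : 2*m+i-1 = 2*m+(i-1) := by omega
      rw [e4]
      ring
  rw [Finset.sum_congr rfl fun i _ => hsum i, Finset.sum_add_distrib]
  rcases Nat.eq_or_lt_of_le h with he | hlt
  · subst he
    have : d = 0 := by omega
    rw [this]
    simp
  · have hd1 : 1 ≤ d := by omega
    rw [if_neg (by omega : ¬ m = n)]
    have hL1 : ∑ i ∈ range (d+1), (-1:ℝ)^i * ((2*m+i).choose i : ℝ) * ((2*n).choose (d-i) : ℝ)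
        = ((2*n - 2*m - 1).choose d : ℝ) := by
      exact Lkey (2*n) (2*m) d (by omega)
    have hL2 : ∑ i ∈ range (d+1), (if i = 0 then 0 else
        (-1:ℝ)^i * ((2*m+(i-1)).choose (i-1) : ℝ) * ((2*n).choose (d-i) : ℝ))
        = -((2*n - 2*m - 1).choose (d-1) : ℝ) := by
      rw [Finset.sum_range_succ']
      simp only [if_neg (Nat.succ_ne_zero _), if_pos rfl, add_zero, Nat.add_sub_cancel]
      have : ∀ i, (-1:ℝ)^(i+1) * ((2*m+i).choose i : ℝ) * ((2*n).choose (d-(i+1)) : ℝ)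
          = -((-1:ℝ)^i * ((2*m+i).choose i : ℝ) * ((2*n).choose ((d-1)-i) : ℝ)) := by
        intro i
        rw [show d-(i+1) = (d-1)-i by omega, pow_succ]
        ring
      rw [Finset.sum_congr rfl fun i _ => this i, Finset.sum_neg_distrib,
        show d = (d-1)+1 by omega]
      rw [show (d-1)+1-1 = d-1 by omega]
      rw [Lkey (2*n) (2*m) (d-1) (by omega)]
      simp
    rw [hL1, hL2]
    have : (2*n-2*m-1).choose d = (2*n-2*m-1).choose (d-1) := by
      rw [← Nat.choose_symm (by omega : d ≤ 2*n-2*m-1)]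
      congr 1
      omega
    rw [this]
    ring

noncomputable def Bf (n k : ℕ) : ℝ :=
  (-1:ℝ)^(k+n) * (((n+k).choose (n-k) : ℝ) +
    if k < n then ((n+k-1).choose (n-k-1) : ℝ) else 0)

lemma stepB (b : ℕ → ℝ) (n : ℕ) :
    ∑ k ∈ range (n+1), ((2*n).choose (n-k):ℝ) * (∑ m ∈ range (k+1), Bf k m * b m)
      = b n := by
  have h1 : ∀ k ∈ range (n+1), ((2*n).choose (n-k):ℝ) * (∑ m ∈ range (k+1), Bf k m * b m)
      = ∑ m ∈ range (k+1), ((2*n).choose (n-k):ℝ) * Bf k m * b m := by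
    intro k _
    rw [Finset.mul_sum]
    exact Finset.sum_congr rfl fun m _ => by ring
  rw [Finset.sum_congr rfl h1]
  simp only [Finset.range_eq_Ico]
  rw [← Finset.sum_Ico_Ico_comm 0 (n+1)
    (fun m k => ((2*n).choose (n-k):ℝ) * Bf k m * b m)]
  have h3 : ∀ m ∈ Ico 0 (n+1),
      ∑ k ∈ Ico m (n+1), ((2*n).choose (n-k):ℝ) * Bf k m * b m
      = (if m = n then 1 else 0) * b m := by
    intro m hm
    have hmn : m ≤ n := by
      simp only [Finset.mem_Ico] at hm; omega
    rw [Finset.Ico_add_one_right_eq_Icc, ← Finset.sum_mul]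
    congr 1
    rw [← orth n m hmn]
    refine Finset.sum_congr rfl fun k _ => ?_
    simp only [Bf]
  rw [Finset.sum_congr rfl h3]
  have h4 : ∀ m ∈ Ico 0 (n+1), (if m = n then 1 else 0) * b m
      = if m = n then b m else 0 := by
    intro m _
    split <;> simp
  rw [Finset.sum_congr rfl h4, Finset.sum_ite_eq' (Ico 0 (n+1)) n b,
    if_pos (by simp [Finset.mem_Ico])]

lemma injA (c c' : ℕ → ℝ)
    (h : ∀ n, ∑ k ∈ range (n+1), ((2*n).choose (n-k):ℝ) * c k
        = ∑ k ∈ range (n+1), ((2*n).choose (n-k):ℝ) * c' k) : ∀ n, c n = c' n := by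
  intro n
  induction n using Nat.strong_induction_on with
  | _ n ih =>
    have hn := h n
    rw [Finset.sum_range_succ, Finset.sum_range_succ] at hn
    have hpre : ∑ k ∈ range n, ((2*n).choose (n-k):ℝ) * c k
        = ∑ k ∈ range n, ((2*n).choose (n-k):ℝ) * c' k :=
      Finset.sum_congr rfl fun k hk => by rw [ih k (Finset.mem_range.mp hk)]
    rw [hpre, Nat.sub_self] at hn
    simp only [Nat.choose_zero_right, Nat.cast_one, one_mul] at hn
    linarith

lemma formEq (n k : ℕ) (hn : 1 ≤ n) (hk : k ≤ n) :
    (-1:ℝ)^(k+n) * (2*n / ((n:ℝ)+k)) * ((n+k).choose (n-k) : ℝ)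
      = (-1:ℝ)^(k+n) * (((n+k).choose (n-k):ℝ) +
          if k < n then ((n+k-1).choose (n-k-1):ℝ) else 0) := by
  have hne : ((n:ℝ)+k) ≠ 0 := by positivity
  have key : 2*(n:ℝ) * ((n+k).choose (n-k) : ℝ)
      = (((n+k).choose (n-k):ℝ) +
          if k < n then ((n+k-1).choose (n-k-1):ℝ) else 0) * ((n:ℝ)+k) := by
    rcases Nat.eq_or_lt_of_le hk with he | hlt
    · subst he
      rw [if_neg (lt_irrefl _), Nat.sub_self]
      simp; ring
    · rw [if_pos hlt]
      have nat_id : (n+k) * (n+k-1).choose (n-k-1) = (n+k).choose (n-k) * (n-k) := by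
        have := Nat.add_one_mul_choose_eq (n+k-1) (n-k-1)
        rw [show n+k-1+1 = n+k by omega, show n-k-1+1 = n-k by omega] at this
        exact this
      have cast_id := congrArg (Nat.cast : ℕ → ℝ) nat_id
      push_cast [Nat.cast_sub hk] at cast_id
      linarith [cast_id]
  have h2 : 2*(n:ℝ)/((n:ℝ)+k) * ((n+k).choose (n-k):ℝ)
      = (((n+k).choose (n-k):ℝ) +
          if k < n then ((n+k-1).choose (n-k-1):ℝ) else 0) := by
    rw [div_mul_eq_mul_div, key, mul_div_cancel_right₀ _ hne]
  rw [mul_assoc, h2]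

theorem stmt11 (b c : ℕ → ℝ) :
    (∀ n : ℕ, b n = ∑ k ∈ Finset.range (n + 1), ((2 * n).choose (n - k) : ℝ) * c k) ↔
    (c 0 = b 0 ∧ ∀ n : ℕ, 1 ≤ n →
      (c n = ∑ k ∈ Finset.range (n + 1),
        (-1 : ℝ) ^ (k + n) * (2 * n / ((n : ℝ) + k)) * ((n + k).choose (n - k) : ℝ) * b k) ∧
      (c n = ∑ k ∈ Finset.range (n + 1),
        (-1 : ℝ) ^ (k + n) * (((n + k).choose (n - k) : ℝ) +
          (if k < n then ((n + k - 1).choose (n - k - 1) : ℝ) else 0)) * b k)) := by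
  have hB00 : Bf 0 0 = 1 := by simp [Bf]
  constructor
  · intro hP
    have hQ : ∀ n, c n = ∑ k ∈ Finset.range (n+1), Bf n k * b k := by
      have h := injA c (fun n => ∑ m ∈ Finset.range (n+1), Bf n m * b m)
        (fun n => by rw [← hP n]; exact (stepB b n).symm)
      exact fun n => h n
    refine ⟨?_, fun n hn => ⟨?_, ?_⟩⟩
    · have := hQ 0
      simpa [hB00] using this
    · rw [hQ n]
      refine Finset.sum_congr rfl fun k hk => ?_
      have hk' : k ≤ n := by
        have := Finset.mem_range.mp hk; omega
      simp only [Bf]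
      rw [formEq n k hn hk']
    · rw [hQ n]
      exact Finset.sum_congr rfl fun k _ => by simp only [Bf]
  · rintro ⟨h0, hR⟩
    have hQ : ∀ n, c n = ∑ k ∈ Finset.range (n+1), Bf n k * b k := by
      intro n
      rcases Nat.eq_zero_or_pos n with rfl | hn
      · simpa [hB00] using h0
      · rw [(hR n hn).2]
        exact Finset.sum_congr rfl fun k _ => by simp only [Bf]
    intro n
    calc b n = ∑ k ∈ Finset.range (n+1),
        ((2*n).choose (n-k):ℝ) * (∑ m ∈ Finset.range (k+1), Bf k m * b m) :=
          (stepB b n).symm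
      _ = ∑ k ∈ Finset.range (n+1), ((2*n).choose (n-k):ℝ) * c k :=
          Finset.sum_congr rfl fun k _ => by rw [← hQ k]
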